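/- Let R be a Bézout domain, K its field of fractions, M a flat R-module, and r a natural number. Then M has rank at most r as an R-module if and only if the K-vector space K ⊗_R M has dimension at most r. -/

import Mathlib

universe u v

/-- Shannon's rank of flat modules: an `R`-module `P` has rank at most `r` if it is
isomorphic to the direct limit of some directed system of `R`-modules in which every
module is a finitely generated free `R`-module of rank at most `r`. -/
def HasRankLE (R : Type u) [CommRing R] (r : ℕ)
    (P : Type v) [AddCommGroup P] [Module R P] : Prop :=
  ∃ (ι : Type v) (_ : Preorder ι) (_ : IsDirected ι (· ≤ ·)) (_ : Nonempty ι)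
    (_ : DecidableEq ι)
    (G : ι → Type v) (_ : ∀ i, AddCommGroup (G i)) (_ : ∀ i, Module R (G i))
    (f : ∀ i j : ι, i ≤ j → G i →ₗ[R] G j)
    (_ : DirectedSystem G fun i j h => f i j h),
    (∀ i, ∃ n : ℕ, n ≤ r ∧ Nonempty (G i ≃ₗ[R] (Fin n → R))) ∧
    Nonempty (Module.DirectLimit G f ≃ₗ[R] P)

universe w

noncomputable def equivFinZero {R : Type u} [CommRing R] {N : Type v} [AddCommGroup N]
    [Module R N] [Subsingleton N] : N ≃ₗ[R] (Fin 0 → R) :=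
  LinearEquiv.ofLinear 0 0 (LinearMap.ext fun _ => Subsingleton.elim _ _)
    (LinearMap.ext fun _ => Subsingleton.elim _ _)


theorem aux_free (R : Type u) [CommRing R] [IsDomain R] [IsBezout R] :
    ∀ (n : ℕ) (N : Type v) [AddCommGroup N] [Module R N] [Module.Finite R N]
      (φ : N →ₗ[R] (Fin n → R)), Function.Injective φ →
      ∃ m : ℕ, m ≤ n ∧ Nonempty (N ≃ₗ[R] (Fin m → R)) := by
  intro n
  induction n with
  | zero =>
    intro N _ _ _ φ hφ
    have : Subsingleton N := ⟨fun a b => hφ (Subsingleton.elim _ _)⟩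
    exact ⟨0, le_refl _, ⟨equivFinZero⟩⟩
  | succ n IH =>
    intro N _ _ _ φ hφ
    set π : N →ₗ[R] R := (LinearMap.proj (Fin.last n)) ∘ₗ φ with hπdef
    have hrangefg : (LinearMap.range π).FG := by
      have h1 : (⊤ : Submodule R N).FG := Module.finite_def.mp inferInstance
      simpa [Submodule.map_top] using h1.map π
    obtain ⟨a, ha⟩ := (IsBezout.isPrincipal_of_FG _ hrangefg).principal
    by_cases ha0 : a = 0
    · -- π = 0, so φ lands in the first n coordinates
      have hπ0 : ∀ x, π x = 0 := by
        intro x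
        have hx : π x ∈ LinearMap.range π := LinearMap.mem_range_self _ x
        rw [ha, ha0] at hx
        obtain ⟨c, hc⟩ := Submodule.mem_span_singleton.mp hx
        rw [← hc, smul_zero]
      set φ' : N →ₗ[R] (Fin n → R) :=
        LinearMap.pi (fun i => (LinearMap.proj (Fin.castSucc i)) ∘ₗ φ) with hφ'def
      have hφ'inj : Function.Injective φ' := by
        intro x y hxy
        apply hφ
        funext i
        refine Fin.lastCases ?_ ?_ i
        · have hx := hπ0 x; have hy := hπ0 y
          simp only [hπdef, LinearMap.comp_apply, LinearMap.proj_apply] at hx hy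
          rw [hx, hy]
        · intro j
          have := congrFun hxy j
          simpa [hφ'def] using this
      obtain ⟨m, hm, he⟩ := IH N φ' hφ'inj
      exact ⟨m, hm.trans (Nat.le_succ n), he⟩
    · -- range π = span {a}, a ≠ 0
      have hmem : ∀ x, π x ∈ Submodule.span R {a} := by
        intro x; rw [← ha]; exact LinearMap.mem_range_self _ x
      set ea := LinearEquiv.toSpanNonzeroSingleton R R a ha0 with headef
      set cr : N →ₗ[R] (Submodule.span R {a}) :=
        π.codRestrict (Submodule.span R {a}) hmem with hcrdef
      set ρ : N →ₗ[R] R := (ea.symm : (Submodule.span R {a}) →ₗ[R] R) ∘ₗ cr with hρdef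
      have hρapp : ∀ x, ρ x = ea.symm (cr x) := fun _ => rfl
      have hρker : ∀ x, ρ x = 0 ↔ π x = 0 := by
        intro x
        constructor
        · intro h
          rw [hρapp] at h
          have h2 : cr x = 0 := by
            have := congrArg ea h
            rw [LinearEquiv.apply_symm_apply, map_zero] at this
            exact this
          exact congrArg Subtype.val h2
        · intro h
          have h2 : cr x = 0 := Subtype.ext h
          rw [hρapp, h2, map_zero]
      have hρsurj : Function.Surjective ρ := by
        intro c
        have hc : (ea c : R) ∈ LinearMap.range π := by rw [ha]; exact (ea c).2
        obtain ⟨x, hx⟩ := hc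
        refine ⟨x, ?_⟩
        have h2 : cr x = ea c := Subtype.ext hx
        rw [hρapp, h2, LinearEquiv.symm_apply_apply]
      obtain ⟨x₀, hx₀⟩ := hρsurj 1
      set g : R →ₗ[R] N := LinearMap.toSpanSingleton R N x₀ with hgdef
      have hρg : ∀ c, ρ (g c) = c := by
        intro c
        rw [hgdef]
        simp only [LinearMap.toSpanSingleton_apply, map_smul, hx₀, smul_eq_mul, mul_one]
      have hqmem : ∀ x : N, ((LinearMap.id : N →ₗ[R] N) - g ∘ₗ ρ) x ∈ LinearMap.ker ρ := by
        intro x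
        simp [LinearMap.mem_ker, map_sub, hρg]
      set q : N →ₗ[R] (LinearMap.ker ρ) :=
        ((LinearMap.id : N →ₗ[R] N) - g ∘ₗ ρ).codRestrict _ hqmem with hqdef
      set F : N →ₗ[R] ((LinearMap.ker ρ) × R) := LinearMap.prod q ρ with hFdef
      set Ginv : ((LinearMap.ker ρ) × R) →ₗ[R] N :=
        (LinearMap.ker ρ).subtype.coprod g with hGdef
      have hFG : F ∘ₗ Ginv = LinearMap.id := by
        apply LinearMap.ext
        rintro ⟨⟨k, hk⟩, c⟩
        rw [LinearMap.mem_ker] at hk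
        apply Prod.ext
        · apply Subtype.ext
          simp [hFdef, hGdef, hqdef, hρg, hk, map_add]
        · simp [hFdef, hGdef, hρg, hk, map_add]
      have hGF : Ginv ∘ₗ F = LinearMap.id := by
        apply LinearMap.ext
        intro x
        simp [hFdef, hGdef, hqdef]
      set E : N ≃ₗ[R] ((LinearMap.ker ρ) × R) := LinearEquiv.ofLinear F Ginv hFG hGF
      have hkerfin : Module.Finite R (LinearMap.ker ρ) := by
        apply Module.Finite.of_surjective q
        rintro ⟨k, hk⟩
        have hk' : ρ k = 0 := hk
        exact ⟨k, Subtype.ext (by simp [hqdef, hk'])⟩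
      set ψ : (LinearMap.ker ρ) →ₗ[R] (Fin n → R) :=
        LinearMap.pi
          (fun i => (LinearMap.proj (Fin.castSucc i)) ∘ₗ (φ ∘ₗ (LinearMap.ker ρ).subtype))
        with hψdef
      have hψinj : Function.Injective ψ := by
        rintro ⟨x, hx⟩ ⟨y, hy⟩ hxy
        have hx' : π x = 0 := (hρker x).mp hx
        have hy' : π y = 0 := (hρker y).mp hy
        apply Subtype.ext
        apply hφ
        funext i
        refine Fin.lastCases ?_ ?_ i
        · simp only [hπdef, LinearMap.comp_apply, LinearMap.proj_apply] at hx' hy'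
          rw [hx', hy']
        · intro j
          have := congrFun hxy j
          simpa [hψdef] using this
      obtain ⟨m, hm, ⟨e2⟩⟩ := IH (LinearMap.ker ρ) ψ hψinj
      refine ⟨m + 1, Nat.succ_le_succ hm, ⟨?_⟩⟩
      exact E.trans ((LinearEquiv.prodCongr e2 (LinearEquiv.refl R R)).trans
        ((LinearEquiv.prodCongr (LinearEquiv.refl R (Fin m → R))
            (LinearEquiv.funUnique (Fin 1) R R).symm).trans
          (((LinearEquiv.sumArrowLequivProdArrow (Fin m) (Fin 1) R R).symm).trans
            (LinearEquiv.funCongrLeft R R finSumFinEquiv.symm))))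

open TensorProduct in
theorem aux_fg_free (R : Type u) [CommRing R] [IsDomain R] [IsBezout R]
    (K : Type w) [Field K] [Algebra R K] [IsFractionRing R K]
    (M : Type v) [AddCommGroup M] [Module R M] [Module.Flat R M] (r : ℕ)
    (hrank : Module.rank K (TensorProduct R K M) ≤ r)
    (N : Submodule R M) (hN : N.FG) :
    ∃ n : ℕ, n ≤ r ∧ Nonempty (N ≃ₗ[R] (Fin n → R)) := by
  classical
  haveI : Module.Finite R N := Module.Finite.iff_fg.mpr hN
  set j : M →ₗ[R] K ⊗[R] M := TensorProduct.mk R K M 1 with hjdef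
  have hj : Function.Injective j := by
    have h1 : Function.Injective (LinearMap.rTensor M (Algebra.linearMap R K)) :=
      Module.Flat.rTensor_preserves_injective_linearMap _ (IsFractionRing.injective R K)
    have h2 : ∀ x : M, j x = (LinearMap.rTensor M (Algebra.linearMap R K))
        ((TensorProduct.lid R M).symm x) := by
      intro x
      simp [hjdef, TensorProduct.lid_symm_apply]
    intro x y hxy
    rw [h2, h2] at hxy
    exact (TensorProduct.lid R M).symm.injective (h1 hxy)
  obtain ⟨t, hspan⟩ := hN
  have htN : ∀ y ∈ t, y ∈ N := fun y hy => hspan ▸ Submodule.subset_span hy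
  set W : Submodule K (K ⊗[R] M) := Submodule.span K (j '' ↑t) with hWdef
  haveI : FiniteDimensional K W :=
    FiniteDimensional.span_of_finite K (((t : Set M).toFinite).image j)
  have hWr : Module.finrank K W ≤ r :=
    Module.finrank_le_of_rank_le ((Submodule.rank_le W).trans hrank)
  set d := Module.finrank K W with hddef
  haveI : Module.Free K W := Module.Free.of_divisionRing K W
  set b : Module.Basis (Fin d) K W := Module.finBasis K W with hbdef
  have hjt : ∀ x ∈ N, j x ∈ W := by
    intro x hx
    rw [← hspan] at hx
    have h3 : j x ∈ Submodule.map j (Submodule.span R ↑t) := Submodule.mem_map_of_mem hx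
    rw [Submodule.map_span] at h3
    have h4 : Submodule.span R (j '' ↑t) ≤ (Submodule.span K (j '' ↑t)).restrictScalars R :=
      Submodule.span_le.mpr (fun z hz => Submodule.subset_span hz)
    exact h4 h3
  set c₀ : N →ₗ[R] (W.restrictScalars R) :=
    (j ∘ₗ N.subtype).codRestrict _ (fun x => hjt x.1 x.2) with hc₀def
  set c : N →ₗ[R] (Fin d → K) :=
    (b.equivFun.restrictScalars R).toLinearMap ∘ₗ c₀ with hcdef
  have hc_inj : Function.Injective c := by
    intro x y hxy
    have h5 : c₀ x = c₀ y := (b.equivFun.restrictScalars R).injective hxy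
    have h6 : j x.1 = j y.1 := congrArg Subtype.val h5
    exact Subtype.ext (hj h6)
  set fam : (↥t × Fin d) → K := fun p => c ⟨(p.1 : M), htN p.1 p.1.2⟩ p.2 with hfamdef
  obtain ⟨s, hs⟩ := IsLocalization.exist_integer_multiples_of_finite (nonZeroDivisors R) fam
  set g : N →ₗ[R] (Fin d → K) := (s : R) • c with hgdef
  have hs0 : algebraMap R K (s : R) ≠ 0 := by
    intro h
    exact nonZeroDivisors.coe_ne_zero s (IsFractionRing.injective R K (by rw [h, map_zero]))
  have hg_app : ∀ (x : N) (i : Fin d), g x i = algebraMap R K (s : R) * c x i := by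
    intro x i
    rw [hgdef]
    simp only [LinearMap.smul_apply, Pi.smul_apply]
    rw [← algebraMap_smul K (s : R) (c x i), smul_eq_mul]
  have hg_inj : Function.Injective g := by
    intro x y hxy
    apply hc_inj
    funext i
    have h7 := congrFun hxy i
    rw [hg_app, hg_app] at h7
    exact mul_left_cancel₀ hs0 h7
  -- the pi-submodule of integral vectors
  set P : Submodule R (Fin d → K) :=
    Submodule.pi (Set.univ : Set (Fin d)) (fun _ => LinearMap.range (Algebra.linearMap R K))
    with hPdef
  set Q : Submodule R N := Submodule.comap g P with hQdef
  -- generators of N inside N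
  set tN : Set N := {x : N | (x : M) ∈ t} with htNdef
  have himg : (⇑N.subtype) '' tN = (↑t : Set M) := by
    apply Set.Subset.antisymm
    · rintro _ ⟨x, hx, rfl⟩; exact hx
    · intro y hy; exact ⟨⟨y, htN y hy⟩, hy, rfl⟩
  have hspanTop : Submodule.span R tN = ⊤ := by
    apply Submodule.map_injective_of_injective N.injective_subtype
    rw [Submodule.map_span, himg, hspan, Submodule.map_top, Submodule.range_subtype]
  have hQtop : Q = ⊤ := by
    rw [eq_top_iff, ← hspanTop]
    apply Submodule.span_le.mpr
    intro x hx
    rw [SetLike.mem_coe, hQdef, Submodule.mem_comap, hPdef, Submodule.mem_pi]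
    intro i _
    have h8 := hs (⟨⟨(x : M), hx⟩, i⟩ : ↥t × Fin d)
    obtain ⟨rr, hrr⟩ := h8
    refine ⟨rr, ?_⟩
    have h9 : (s : R) • fam (⟨(x : M), hx⟩, i) = g x i := by
      rw [hfamdef]
      show (s : R) • c (⟨(x : M), htN _ hx⟩ : N) i = g x i
      rw [← algebraMap_smul K (s : R) (c (⟨(x : M), htN _ hx⟩ : N) i), smul_eq_mul, ← hg_app]
    rw [Algebra.linearMap_apply, hrr]
    exact h9
  -- (Fin d → R) ≃ₗ[R] P
  set base : (Fin d → R) →ₗ[R] (Fin d → K) :=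
    LinearMap.pi (fun i => (Algebra.linearMap R K) ∘ₗ LinearMap.proj i) with hbasedef
  have hbasemem : ∀ v, base v ∈ P := by
    intro v
    rw [hPdef, Submodule.mem_pi]
    intro i _
    exact ⟨v i, rfl⟩
  set El : (Fin d → R) →ₗ[R] P := base.codRestrict _ hbasemem with hEldef
  have hElbij : Function.Bijective El := by
    constructor
    · intro v w hvw
      funext i
      have h9 : base v i = base w i := congrFun (congrArg Subtype.val hvw) i
      exact IsFractionRing.injective R K h9
    · rintro ⟨wv, hw⟩
      rw [hPdef, Submodule.mem_pi] at hw
      choose vv hvv using fun i => hw i (Set.mem_univ i)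
      refine ⟨vv, ?_⟩
      apply Subtype.ext
      funext i
      exact hvv i
  set E : (Fin d → R) ≃ₗ[R] P := LinearEquiv.ofBijective El hElbij
  set final : N →ₗ[R] (Fin d → R) :=
    E.symm.toLinearMap ∘ₗ (g.codRestrict P (fun x => by
      have : x ∈ Q := hQtop ▸ Submodule.mem_top
      exact this)) with hfinaldef
  have hfinal_inj : Function.Injective final := by
    intro x y hxy
    have h10 : g.codRestrict P _ x = g.codRestrict P _ y := E.symm.injective hxy
    exact hg_inj (congrArg Subtype.val h10)
  obtain ⟨n, hn, he⟩ := aux_free R d N final hfinal_inj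
  exact ⟨n, hn.trans hWr, he⟩

open TensorProduct

/-- Lemma 3.8: over a Bézout domain `R` with fraction field `K`, a flat `R`-module `M`
has rank at most `r` if and only if the `K`-vector space `K ⊗_R M` has dimension at
most `r`. -/
theorem hasRankLE_iff_rank_baseChange_le (R : Type u) [CommRing R] [IsDomain R] [IsBezout R]
    (K : Type w) [Field K] [Algebra R K] [IsFractionRing R K]
    (M : Type v) [AddCommGroup M] [Module R M] [Module.Flat R M] (r : ℕ) :
    HasRankLE R r M ↔ Module.rank K (TensorProduct R K M) ≤ r := by
  classical
  constructor
  · rintro ⟨ι, _pre, _dir, _ne, _dec, G, _aG, _mG, f, _dsys, hfree, ⟨e⟩⟩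
    haveI : IsLocalizedModule (nonZeroDivisors R) (TensorProduct.mk R K M 1) :=
      (isLocalizedModule_iff_isBaseChange (nonZeroDivisors R) K
        (TensorProduct.mk R K M 1)).mpr (TensorProduct.isBaseChange R M K)
    apply rank_le
    intro s hs
    -- clear denominators
    have hsurj := fun x : ↥s =>
      IsLocalizedModule.surj (nonZeroDivisors R) (TensorProduct.mk R K M 1) (x : K ⊗[R] M)
    choose p hp using hsurj
    have hne : ∀ x : ↥s, algebraMap R K ((p x).2 : R) ≠ 0 := by
      intro x h
      exact nonZeroDivisors.coe_ne_zero (p x).2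
        (IsFractionRing.injective R K (by rw [h, map_zero]))
    set wu : ↥s → Kˣ := fun x => Units.mk0 (algebraMap R K ((p x).2 : R)) (hne x) with hwudef
    have hindep : LinearIndependent K (wu • (fun x : ↥s => (x : K ⊗[R] M))) :=
      hs.units_smul wu
    have hval : ∀ x : ↥s, (wu • (fun y : ↥s => (y : K ⊗[R] M))) x
        = TensorProduct.mk R K M 1 ((p x).1) := by
      intro x
      have h1 := hp x
      rw [Pi.smul_apply']
      rw [← h1]
      show (algebraMap R K ((p x).2 : R)) • (x : K ⊗[R] M) = (p x).2 • (x : K ⊗[R] M)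
      rw [algebraMap_smul]
      rfl
    -- find a common index
    have hex := fun x : ↥s => Module.DirectLimit.exists_of (e.symm ((p x).1))
    choose ifun gfun hgf using hex
    obtain ⟨i₀, hi₀⟩ := (Finset.image ifun Finset.univ).exists_le
    have hle : ∀ x : ↥s, ifun x ≤ i₀ := fun x =>
      hi₀ _ (Finset.mem_image_of_mem ifun (Finset.mem_univ x))
    set φ : G i₀ →ₗ[R] M := e.toLinearMap ∘ₗ Module.DirectLimit.of R ι G f i₀ with hφdef
    set g' : ↥s → G i₀ := fun x => f (ifun x) i₀ (hle x) (gfun x) with hg'def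
    have hφg' : ∀ x : ↥s, φ (g' x) = (p x).1 := by
      intro x
      rw [hφdef, hg'def]
      simp only [LinearMap.comp_apply, LinearEquiv.coe_toLinearMap]
      rw [Module.DirectLimit.of_f]
      rw [hgf x, LinearEquiv.apply_symm_apply]
    set T : K ⊗[R] (G i₀) →ₗ[K] K ⊗[R] M := LinearMap.baseChange K φ with hTdef
    have hT : ∀ x : ↥s, T (1 ⊗ₜ[R] (g' x)) = TensorProduct.mk R K M 1 ((p x).1) := by
      intro x
      rw [hTdef]
      simp [LinearMap.baseChange_tmul, hφg' x]
    obtain ⟨n, hn, ⟨iso⟩⟩ := hfree i₀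
    set bR : Module.Basis (Fin n) R (G i₀) := (Pi.basisFun R (Fin n)).map iso.symm with hbRdef
    set bK : Module.Basis (Fin n) K (K ⊗[R] (G i₀)) := Algebra.TensorProduct.basis K bR with hbKdef
    set wset : Set (K ⊗[R] M) := Set.range (fun k : Fin n => T (bK k)) with hwsetdef
    have hsub : Set.range (wu • (fun x : ↥s => (x : K ⊗[R] M))) ≤
        ↑(Submodule.span K wset) := by
      rintro z ⟨x, rfl⟩
      rw [hval x, ← hT x]
      have h2 : (1 : K) ⊗ₜ[R] (g' x) ∈ Submodule.span K (Set.range bK) := by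
        rw [bK.span_eq]; trivial
      have h3 : T ((1 : K) ⊗ₜ[R] (g' x)) ∈ Submodule.map T (Submodule.span K (Set.range bK)) :=
        Submodule.mem_map_of_mem h2
      rw [Submodule.map_span] at h3
      have h4 : T '' Set.range bK = wset := by
        rw [hwsetdef, ← Set.range_comp]
        rfl
      rw [h4] at h3
      exact h3
    have hcard := linearIndependent_le_span' _ hindep wset hsub
    rw [Cardinal.mk_coe_finset] at hcard
    have hcard2 : s.card ≤ Fintype.card wset := by exact_mod_cast hcard
    have hcard3 : Fintype.card wset ≤ n := by
      have := Fintype.card_range_le (fun k : Fin n => T (bK k))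
      simpa [hwsetdef, Fintype.card_fin] using this
    exact (hcard2.trans hcard3).trans hn
  · intro hrank
    let ι' : Type v := {N : Submodule R M // N.FG}
    let G' : ι' → Type v := fun N => ↥N.1
    let f' : ∀ A B : ι', A ≤ B → G' A →ₗ[R] G' B := fun _ _ h => Submodule.inclusion h
    haveI hdir : IsDirected ι' (· ≤ ·) :=
      ⟨fun A B => ⟨⟨A.1 ⊔ B.1, A.2.sup B.2⟩,
        (by show A.1 ≤ A.1 ⊔ B.1; exact le_sup_left),
        (by show B.1 ≤ A.1 ⊔ B.1; exact le_sup_right)⟩⟩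
    haveI hne : Nonempty ι' := ⟨⟨⊥, Submodule.fg_bot⟩⟩
    haveI hde : DecidableEq ι' := Classical.decEq _
    have hds : DirectedSystem G' fun A B h => f' A B h :=
      ⟨fun i x => rfl, fun k j i hij hjk x => rfl⟩
    set L := Module.DirectLimit.lift R ι' G' f'
      (fun N => N.1.subtype) (fun _ _ _ _ => rfl) with hLdef
    have hinj : Function.Injective L :=
      Module.DirectLimit.lift_injective _ _ (fun N => N.1.injective_subtype)
    have hsurj : Function.Surjective L := by
      intro x
      refine ⟨Module.DirectLimit.of R ι' G' f'
        ⟨Submodule.span R {x}, Submodule.fg_span_singleton x⟩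
        ⟨x, Submodule.mem_span_singleton_self x⟩, ?_⟩
      rw [hLdef]; refine (Module.DirectLimit.lift_of _ _ _).trans ?_
      rfl
    exact ⟨ι', inferInstance, hdir, hne, hde, G', fun N => inferInstance,
      fun N => inferInstance, f', hds,
      fun N => aux_fg_free R K M r hrank N.1 N.2,
      ⟨LinearEquiv.ofBijective L ⟨hinj, hsurj⟩⟩⟩
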